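/- The map sl(2)⊗tK[t] → sl(2)⊗tK[t] defined on basis elements by e₋⊗tⁿ ↦ e₋⊗(ntⁿ − tⁿ⁺¹), e₊⊗tⁿ ↦ e₊⊗(ntⁿ + tⁿ⁺¹), h⊗tⁿ ↦ h⊗ntⁿ (for all n ≥ 1) is a derivation of the current Lie algebra sl(2)⊗tK[t]. -/

import Mathlib

open TensorProduct Polynomial

/-- The non-unital commutative algebra `tK[t]` of polynomials with zero constant term. -/
def tPoly (K : Type*) [Field K] : NonUnitalSubalgebra K (Polynomial K) where
  carrier := {p | p.coeff 0 = 0}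
  add_mem' := by intro a b ha hb; simp_all [Polynomial.coeff_add]
  zero_mem' := by simp
  mul_mem' := by intro a b ha hb; simp_all [Polynomial.mul_coeff_zero]
  smul_mem' := by intro c p hp; simp_all

/-- The element `tⁿ⁺¹` of `tK[t]`. -/
noncomputable def tp (K : Type*) [Field K] (n : ℕ) : tPoly K :=
  ⟨Polynomial.X ^ (n + 1), by show (Polynomial.X ^ (n+1) : Polynomial K).coeff 0 = 0; simp [Polynomial.coeff_X_pow]⟩

/-- The map `sl(2) ⊗ tK[t] → sl(2) ⊗ tK[t]` given on basis elements by
`e₋ ⊗ tⁿ ↦ e₋ ⊗ (n tⁿ - tⁿ⁺¹)`, `e₊ ⊗ tⁿ ↦ e₊ ⊗ (n tⁿ + tⁿ⁺¹)`, `h ⊗ tⁿ ↦ h ⊗ n tⁿ`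
is a derivation of the current Lie algebra `sl(2) ⊗ tK[t]`. -/
lemma tp_mul (K : Type*) [Field K] (m n : ℕ) :
    tp K m * tp K n = tp K (m + n + 1) := by
  apply Subtype.ext
  show (Polynomial.X ^ (m+1) * Polynomial.X ^ (n+1) : Polynomial K) = Polynomial.X ^ (m+n+1+1)
  rw [← pow_add]; ring_nf

lemma tp_span (K : Type*) [Field K] (q : tPoly K) :
    q ∈ Submodule.span K (Set.range (tp K)) := by
  obtain ⟨p, hp⟩ := q
  have hq : (⟨p, hp⟩ : tPoly K) = ∑ n ∈ p.support, p.coeff n • tp K (n - 1) := by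
    apply Subtype.ext
    push_cast
    conv_lhs => rw [p.as_sum_support]
    refine Finset.sum_congr rfl fun n hn => ?_
    have hn0 : n ≠ 0 := fun h => by
      subst h; exact Polynomial.mem_support_iff.mp hn hp
    show (Polynomial.monomial n (p.coeff n) : Polynomial K) = p.coeff n • Polynomial.X ^ (n - 1 + 1)
    rw [Nat.sub_add_cancel (Nat.one_le_iff_ne_zero.mpr hn0), Polynomial.smul_X_eq_monomial]
  rw [hq]
  exact Submodule.sum_mem _ fun n _ => Submodule.smul_mem _ _
    (Submodule.subset_span ⟨n - 1, rfl⟩)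

set_option maxHeartbeats 1000000 in
theorem sl2_tpoly_derivation
    (K : Type*) [Field K] [CharZero K]
    (L : Type*) [LieRing L] [LieAlgebra K L]
    (Em H Ep : L)
    (b : Module.Basis (Fin 3) K L)
    (hb0 : b 0 = Em) (hb1 : b 1 = H) (hb2 : b 2 = Ep)
    (rel1 : ⁅H, Em⁆ = - Em) (rel2 : ⁅H, Ep⁆ = Ep) (rel3 : ⁅Em, Ep⁆ = H)
    (B : (L ⊗[K] tPoly K) →ₗ[K] (L ⊗[K] tPoly K) →ₗ[K] (L ⊗[K] tPoly K))
    (hB : ∀ (x y : L) (a c : tPoly K),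
      B (x ⊗ₜ[K] a) (y ⊗ₜ[K] c) = ⁅x, y⁆ ⊗ₜ[K] (a * c))
    (D : (L ⊗[K] tPoly K) →ₗ[K] (L ⊗[K] tPoly K))
    (hDm : ∀ n : ℕ, D (Em ⊗ₜ[K] tp K n) =
      Em ⊗ₜ[K] (((n : K) + 1) • tp K n - tp K (n + 1)))
    (hDp : ∀ n : ℕ, D (Ep ⊗ₜ[K] tp K n) =
      Ep ⊗ₜ[K] (((n : K) + 1) • tp K n + tp K (n + 1)))
    (hDh : ∀ n : ℕ, D (H ⊗ₜ[K] tp K n) = H ⊗ₜ[K] (((n : K) + 1) • tp K n)) :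
    ∀ u v, D (B u v) = B (D u) v + B u (D v) := by
  set P : L → K → Prop := fun x c =>
    ∀ n : ℕ, D (x ⊗ₜ[K] tp K n) = x ⊗ₜ[K] (((n : K) + 1) • tp K n + c • tp K (n+1))
    with hP
  have hEm : P Em (-1) := by
    intro n; rw [hDm n]; congr 1; rw [neg_one_smul]; abel
  have hEp : P Ep 1 := by
    intro n; rw [hDp n]; congr 1; rw [one_smul]
  have hH : P H 0 := by
    intro n; rw [hDh n]; congr 1; rw [zero_smul, add_zero]
  have hneg : ∀ x c, P x c → P (-x) c := by
    intro x c hx n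
    have h := hx n
    rw [neg_tmul, neg_tmul, map_neg D (x ⊗ₜ[K] tp K n), h]
  have hzero : ∀ c : K, P 0 c := by
    intro c n; simp [zero_tmul]
  have key : ∀ (x y : L) (cx cy : K), P x cx → P y cy → P ⁅x, y⁆ (cx + cy) →
      ∀ m n, D (B (x ⊗ₜ[K] tp K m) (y ⊗ₜ[K] tp K n)) =
        B (D (x ⊗ₜ[K] tp K m)) (y ⊗ₜ[K] tp K n)
          + B (x ⊗ₜ[K] tp K m) (D (y ⊗ₜ[K] tp K n)) := by
    intro x y cx cy hx hy hxy m n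
    have h4 : tp K (m + 1 + n + 1) = tp K (m + n + 1 + 1) := by congr 1 <;> omega
    have h5 : tp K (m + (n + 1) + 1) = tp K (m + n + 1 + 1) := by congr 1 <;> omega
    rw [hB, tp_mul, hxy, hx, hy]
    simp only [tmul_add, tmul_smul, map_add, map_smul, LinearMap.add_apply,
      LinearMap.smul_apply, hB, tp_mul, h4, h5]
    simp only [← tmul_smul, ← tmul_add]
    congr 1
    push_cast
    module
  have hb0' : b ⟨0, by omega⟩ = Em := hb0
  have hb1' : b ⟨1, by omega⟩ = H := hb1
  have hb2' : b ⟨2, by omega⟩ = Ep := hb2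
  have e01 : ⁅Em, H⁆ = Em := by rw [← lie_skew, rel1, neg_neg]
  have e21 : ⁅Ep, H⁆ = -Ep := by rw [← lie_skew, rel2]
  have e20 : ⁅Ep, Em⁆ = -H := by rw [← lie_skew, rel3]
  have genCase : ∀ (i j : Fin 3) (m n : ℕ),
      D (B (b i ⊗ₜ[K] tp K m) (b j ⊗ₜ[K] tp K n)) =
        B (D (b i ⊗ₜ[K] tp K m)) (b j ⊗ₜ[K] tp K n)
          + B (b i ⊗ₜ[K] tp K m) (D (b j ⊗ₜ[K] tp K n)) := by
    intro i j m n
    fin_cases i <;> fin_cases j <;> simp only [hb0', hb1', hb2']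
    · exact key Em Em (-1) (-1) hEm hEm (by rw [lie_self]; exact hzero _) m n
    · exact key Em H (-1) 0 hEm hH (by rw [e01]; simpa using hEm) m n
    · exact key Em Ep (-1) 1 hEm hEp (by rw [rel3]; simpa using hH) m n
    · exact key H Em 0 (-1) hH hEm (by rw [rel1]; simpa using hneg _ _ hEm) m n
    · exact key H H 0 0 hH hH (by rw [lie_self]; exact hzero _) m n
    · exact key H Ep 0 1 hH hEp (by rw [rel2]; simpa using hEp) m n
    · exact key Ep Em 1 (-1) hEp hEm (by rw [e20]; simpa using hneg _ _ hH) m n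
    · exact key Ep H 1 0 hEp hH (by rw [e21]; simpa using hneg _ _ hEp) m n
    · exact key Ep Ep 1 1 hEp hEp (by rw [lie_self]; exact hzero _) m n
  set S : Submodule K (L ⊗[K] tPoly K) :=
    Submodule.span K (Set.range fun p : Fin 3 × ℕ => (b p.1) ⊗ₜ[K] tp K p.2) with hSdef
  have hS : ∀ u : L ⊗[K] tPoly K, u ∈ S := by
    intro u
    induction u using TensorProduct.induction_on with
    | zero => exact S.zero_mem
    | add u v hu hv => exact S.add_mem hu hv
    | tmul x a =>
      have hbase : ∀ i : Fin 3, (b i) ⊗ₜ[K] a ∈ S := by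
        intro i
        have ha := tp_span K a
        induction ha using Submodule.span_induction with
        | mem q hq => obtain ⟨n, rfl⟩ := hq; exact Submodule.subset_span ⟨(i, n), rfl⟩
        | zero => rw [tmul_zero]; exact S.zero_mem
        | add q r _ _ hq hr => rw [tmul_add]; exact S.add_mem hq hr
        | smul c q _ hq => rw [tmul_smul]; exact S.smul_mem c hq
      rw [← b.sum_repr x, TensorProduct.sum_tmul]
      refine S.sum_mem fun i _ => ?_
      rw [← smul_tmul']
      exact S.smul_mem _ (hbase i)
  intro u v
  have hu := hS u
  induction hu using Submodule.span_induction with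
  | mem u hu =>
    obtain ⟨⟨i, m⟩, rfl⟩ := hu
    have hv := hS v
    induction hv using Submodule.span_induction with
    | mem v hv => obtain ⟨⟨j, n⟩, rfl⟩ := hv; exact genCase i j m n
    | zero => simp
    | add v w _ _ hv hw =>
      simp only [map_add]
      rw [hv, hw]; abel
    | smul c v _ hv =>
      simp only [map_smul]
      rw [hv, smul_add]
  | zero => simp
  | add u w _ _ hu hw =>
    simp only [map_add, LinearMap.add_apply]
    rw [hu, hw]; abel
  | smul c u _ hu =>
    simp only [map_smul, LinearMap.smul_apply]
    rw [hu, smul_add]
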